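/- Let C^i ∈ H¹(Y_f), i = 1,2,3, be Y-periodic weak solutions of ∇_y·(e^i + ∇_y C^i) = 0 in Y_f with Neumann condition (e^i + ∇_y C^i)·N = 0 on γ. Define the matrix B^{(c)} with entries B^{(c)}_{ij} = ∫_{Y_f} (e^i + ∇_y C^i)·(e^j + ∇_y C^j) dy. Then B^{(c)} is symmetric and strictly positive definite. -/

import Mathlib

open MeasureTheory Real

noncomputable section

def normSq (v : Fin 3 → ℝ) : ℝ := ∑ i, (v i) ^ 2

/-- Standard basis vector e^i of ℝ³. -/
def stdBasis (i : Fin 3) : Fin 3 → ℝ := fun k => if k = i then 1 else 0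

/-- Gradient (as a vector) of a scalar function on ℝ³. -/
def grad (u : (Fin 3 → ℝ) → ℝ) (y : Fin 3 → ℝ) : Fin 3 → ℝ :=
  fun i => fderiv ℝ u y (Pi.single i 1)

def Yf (r : ℝ) : Set (Fin 3 → ℝ) :=
  {y | (∀ i, -(1 / 2 : ℝ) < y i ∧ y i < 1 / 2) ∧ r ^ 2 < normSq y}

def YPeriodicS (u : (Fin 3 → ℝ) → ℝ) : Prop :=
  ∀ y : Fin 3 → ℝ, ∀ k : Fin 3 → ℤ, u (fun i => y i + (k i : ℝ)) = u y

/-- Entries of the homogenized diffusion matrix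
B^{(c)}_{ij} = ∫_{Y_f} (e^i + ∇_y C^i)·(e^j + ∇_y C^j) dy. -/
def Bc (r : ℝ) (C : Fin 3 → (Fin 3 → ℝ) → ℝ) (i j : Fin 3) : ℝ :=
  ∫ y in Yf r, ∑ k, (stdBasis i k + grad (C i) y k) * (stdBasis j k + grad (C j) y k)

lemma quad_identity (v : Fin 3 → Fin 3 → ℝ) (ξ : Fin 3 → ℝ) :
    ∑ i, ∑ j, (∑ k, v i k * v j k) * ξ i * ξ j = ∑ k, (∑ i, ξ i * v i k) ^ 2 := by
  simp only [Fin.sum_univ_three]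
  ring

lemma isOpen_Yf (r : ℝ) : IsOpen (Yf r) := by
  have h1 : IsOpen {y : Fin 3 → ℝ | ∀ i, -(1 / 2 : ℝ) < y i ∧ y i < 1 / 2} := by
    have : {y : Fin 3 → ℝ | ∀ i, -(1 / 2 : ℝ) < y i ∧ y i < 1 / 2} =
        ⋂ i, ((fun y : Fin 3 → ℝ => y i) ⁻¹' Set.Ioo (-(1 / 2 : ℝ)) (1 / 2)) := by
      ext y; simp [Set.mem_iInter, Set.mem_Ioo]
    rw [this]
    exact isOpen_iInter_of_finite fun i => isOpen_Ioo.preimage (continuous_apply i)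
  have hcont : Continuous normSq := by
    unfold normSq
    exact continuous_finset_sum _ fun i _ => (continuous_apply i).pow 2
  exact h1.inter (isOpen_lt continuous_const hcont)

/-- The homogenized diffusion matrix B^{(c)}, built from the Y-periodic weak solutions C^i of
∇·(e^i + ∇C^i) = 0 in Y_f with (e^i + ∇C^i)·N = 0 on γ (weak form: ∫ (e^i+∇C^i)·∇φ = 0 for
all Y-periodic test φ), is symmetric and strictly positive definite. -/
theorem stmt_7 (r : ℝ) (hr : 0 < r) (hr' : r < 1 / 2)
    (C : Fin 3 → (Fin 3 → ℝ) → ℝ)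
    (hreg : ∀ i, ContDiff ℝ 1 (C i)) (hper : ∀ i, YPeriodicS (C i))
    (hweak : ∀ i, ∀ φ : (Fin 3 → ℝ) → ℝ, ContDiff ℝ 1 φ → YPeriodicS φ →
      ∫ y in Yf r, ∑ k, (stdBasis i k + grad (C i) y k) * grad φ y k = 0) :
    (∀ i j, Bc r C i j = Bc r C j i) ∧
    (∀ ξ : Fin 3 → ℝ, ξ ≠ 0 → 0 < ∑ i, ∑ j, Bc r C i j * ξ i * ξ j) := by
  have hgradC : ∀ i k, Continuous fun y => grad (C i) y k := by
    intro i k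
    exact ((hreg i).continuous_fderiv one_ne_zero).clm_apply continuous_const
  have hcube : Yf r ⊆ Set.Icc (fun _ => -(1 / 2 : ℝ)) (fun _ => (1 / 2 : ℝ)) := by
    rintro y ⟨h1, -⟩
    exact ⟨fun i => (h1 i).1.le, fun i => (h1 i).2.le⟩
  have hYopen := isOpen_Yf r
  have hYmeas : MeasurableSet (Yf r) := hYopen.measurableSet
  have hint : ∀ g : (Fin 3 → ℝ) → ℝ, Continuous g → IntegrableOn g (Yf r) := fun g hg =>
    (hg.continuousOn.integrableOn_compact isCompact_Icc).mono_set hcube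
  constructor
  · intro i j
    unfold Bc
    congr 1
    funext y
    exact Finset.sum_congr rfl fun k _ => mul_comm _ _
  intro ξ hξ
  set u : (Fin 3 → ℝ) → ℝ := fun y => ∑ i, ξ i * C i y with hu
  have hudiff : ∀ y, HasFDerivAt u (∑ i, ξ i • fderiv ℝ (C i) y) y := by
    intro y
    refine HasFDerivAt.fun_sum fun i _ => ?_
    exact
      (((hreg i).differentiable one_ne_zero y).hasFDerivAt).const_smul (ξ i)
  have hgradu : ∀ y k, grad u y k = ∑ i, ξ i * grad (C i) y k := by
    intro y k
    simp [grad, (hudiff y).fderiv, ContinuousLinearMap.sum_apply,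
      ContinuousLinearMap.smul_apply, smul_eq_mul]
  set f : (Fin 3 → ℝ) → ℝ := fun y => ∑ k, (ξ k + grad u y k) ^ 2 with hf
  have hfnn : ∀ y, 0 ≤ f y := fun y => Finset.sum_nonneg fun k _ => sq_nonneg _
  have hfcont : Continuous f := by
    have h1 : Continuous fun y => ∑ k : Fin 3, (ξ k + ∑ i, ξ i * grad (C i) y k) ^ 2 :=
      continuous_finset_sum _ fun k _ =>
        (continuous_const.add (continuous_finset_sum _ fun i _ =>
          continuous_const.mul (hgradC i k))).pow 2
    exact h1.congr fun y => by simp [hf, hgradu]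
  have hsum : ∀ y k, ∑ i, ξ i * (stdBasis i k + grad (C i) y k) = ξ k + grad u y k := by
    intro y k
    rw [hgradu]
    simp [mul_add, Finset.sum_add_distrib, stdBasis, mul_ite, Finset.sum_ite_eq]
  have hQ : ∑ i, ∑ j, Bc r C i j * ξ i * ξ j = ∫ y in Yf r, f y := by
    have h1 : ∀ i j, Bc r C i j * ξ i * ξ j
        = ∫ y in Yf r, (∑ k, (stdBasis i k + grad (C i) y k) *
            (stdBasis j k + grad (C j) y k)) * ξ i * ξ j := by
      intro i j
      rw [Bc, ← integral_mul_const, ← integral_mul_const]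
    have hgint : ∀ i j : Fin 3, IntegrableOn
        (fun y => (∑ k, (stdBasis i k + grad (C i) y k) *
          (stdBasis j k + grad (C j) y k)) * ξ i * ξ j) (Yf r) := by
      intro i j
      refine hint _ ?_
      exact ((continuous_finset_sum _ fun k _ =>
        (continuous_const.add (hgradC i k)).mul (continuous_const.add (hgradC j k))).mul
        continuous_const).mul continuous_const
    have step1 : ∀ i : Fin 3, ∑ j, Bc r C i j * ξ i * ξ j
        = ∫ y in Yf r, ∑ j, (∑ k, (stdBasis i k + grad (C i) y k) *
            (stdBasis j k + grad (C j) y k)) * ξ i * ξ j := by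
      intro i
      simp_rw [h1 i]
      exact (integral_finset_sum _ fun j _ => hgint i j).symm
    simp_rw [step1]
    rw [← integral_finset_sum _ fun i _ => integrable_finset_sum _ fun j _ => hgint i j]
    · apply integral_congr_ae
      filter_upwards with y
      rw [show (∑ i, ∑ j, (∑ k, (stdBasis i k + grad (C i) y k) *
            (stdBasis j k + grad (C j) y k)) * ξ i * ξ j)
          = ∑ k, (∑ i, ξ i * (stdBasis i k + grad (C i) y k)) ^ 2 from
        quad_identity (fun i k => stdBasis i k + grad (C i) y k) ξ]
      exact Finset.sum_congr rfl fun k _ => by rw [hsum y k]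
  rw [hQ]
  have hQnn : 0 ≤ ∫ y in Yf r, f y := setIntegral_nonneg hYmeas fun y _ => hfnn y
  rcases hQnn.lt_or_eq with h | h
  · exact h
  exfalso
  -- f vanishes on Yf r
  have hzero : ∀ y ∈ Yf r, f y = 0 := by
    intro y₀ hy₀
    by_contra hne
    have hpos : 0 < f y₀ := (hfnn y₀).lt_of_ne (Ne.symm hne)
    have hopen : IsOpen (Yf r ∩ f ⁻¹' Set.Ioi (f y₀ / 2)) :=
      hYopen.inter (isOpen_Ioi.preimage hfcont)
    obtain ⟨ε, hε, hball⟩ := Metric.isOpen_iff.1 hopen y₀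
      ⟨hy₀, by simp only [Set.mem_preimage, Set.mem_Ioi]; linarith⟩
    have hb1 : Metric.ball y₀ ε ⊆ Yf r := fun z hz => (hball hz).1
    have hle : f y₀ / 2 * (volume (Metric.ball y₀ ε)).toReal ≤ ∫ y in Metric.ball y₀ ε, f y :=
      by
        have := setIntegral_ge_of_const_le_real measurableSet_ball measure_ball_lt_top.ne
          (fun x hx => le_of_lt (hball hx).2) ((hint f hfcont).mono_set hb1)
        exact this
    have hmono : ∫ y in Metric.ball y₀ ε, f y ≤ ∫ y in Yf r, f y :=
      setIntegral_mono_set (hint f hfcont) (Filter.Eventually.of_forall hfnn)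
        (HasSubset.Subset.eventuallyLE hb1)
    have hvol : 0 < (volume (Metric.ball y₀ ε)).toReal :=
      ENNReal.toReal_pos (Metric.measure_ball_pos volume y₀ hε).ne' measure_ball_lt_top.ne
    nlinarith [mul_pos (half_pos hpos) hvol]
  have hgradval : ∀ y ∈ Yf r, ∀ k, grad u y k = -ξ k := by
    intro y hy k
    have h1 : (ξ k + grad u y k) ^ 2 = 0 :=
      (Finset.sum_eq_zero_iff_of_nonneg fun k _ => sq_nonneg _).1 (hzero y hy) k
        (Finset.mem_univ k)
    have h2 : ξ k + grad u y k = 0 := by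
      exact (pow_eq_zero_iff two_ne_zero).1 h1
    linarith
  have hucont : Continuous u := continuous_finset_sum _ fun i _ =>
    continuous_const.mul (hreg i).continuous
  have huper : YPeriodicS u := by
    intro y k
    exact Finset.sum_congr rfl fun i _ => by rw [hper i y k]
  have hxi : ∀ k : Fin 3, ξ k = 0 := by
    intro k
    set a : ℝ := 9 / 20 with ha
    set p : ℝ → (Fin 3 → ℝ) := fun t i => if i = k then t else a with hp
    have hpmem : ∀ t ∈ Set.Ioo (-(1 / 2) : ℝ) (1 / 2), p t ∈ Yf r := by
      intro t ht
      constructor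
      · intro i
        by_cases hik : i = k
        · have h1' := ht.1
          have h2' := ht.2
          constructor <;> simp [hp, hik] <;> linarith
        · simp only [hp, hik, if_false]
          norm_num [ha]
      · have h14 : r ^ 2 < 1 / 4 := by nlinarith
        have h2 : (1 : ℝ) / 4 ≤ normSq (p t) := by
          have ht2 : 0 ≤ t ^ 2 := sq_nonneg t
          fin_cases k <;> simp [normSq, Fin.sum_univ_three, hp, ha] <;> nlinarith
        linarith
    have hderiv : ∀ t ∈ Set.Ioo (-(1 / 2) : ℝ) (1 / 2),
        HasDerivAt (fun t => u (p t)) (-ξ k) t := by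
      intro t ht
      have hpt : HasDerivAt p (Pi.single k 1) t := by
        have h1 : HasDerivAt (fun s : ℝ => s • (Pi.single k 1 : Fin 3 → ℝ))
            ((1 : ℝ) • (Pi.single k 1 : Fin 3 → ℝ)) t := (hasDerivAt_id t).smul_const _
        have h2 := h1.const_add (fun i => if i = k then (0 : ℝ) else a)
        have h3 : (fun s : ℝ => (fun i => if i = k then (0 : ℝ) else a)
            + s • (Pi.single k 1 : Fin 3 → ℝ)) = p := by
          funext s
          funext i
          by_cases hik : i = k <;> simp [hp, hik, Pi.single_apply]
        rw [h3] at h2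
        simpa using h2
      have hcomp := (hudiff (p t)).comp_hasDerivAt t hpt
      have hval : ((∑ i, ξ i • fderiv ℝ (C i) (p t))) (Pi.single k 1) = -ξ k := by
        rw [← (hudiff (p t)).fderiv]
        exact hgradval (p t) (hpmem t ht) k
      rw [hval] at hcomp
      exact hcomp
    have hcontg : ContinuousOn (fun t => u (p t)) (Set.Icc (-(1 / 2) : ℝ) (1 / 2)) := by
      apply Continuous.continuousOn
      refine hucont.comp (continuous_pi fun i => ?_)
      by_cases hik : i = k
      · simpa [hp, hik] using continuous_id'
      · simpa [hp, hik] using continuous_const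
    obtain ⟨c, hc, hcval⟩ := exists_hasDerivAt_eq_slope (fun t => u (p t)) (fun _ => -ξ k)
      (by norm_num : (-(1 / 2) : ℝ) < 1 / 2) hcontg hderiv
    have hperiod : u (p (1 / 2)) = u (p (-(1 / 2))) := by
      have h1 := huper (p (-(1 / 2))) (fun i => if i = k then 1 else 0)
      rw [← h1]
      congr 1
      funext i
      by_cases hik : i = k <;> simp [hp, hik] <;> norm_num
    rw [hperiod] at hcval
    simp only [sub_self, zero_div] at hcval
    linarith [hcval]
  exact hξ (funext fun k => hxi k)

end
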